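/- Let D : ℝ² → ℝ² be a C¹ vector field with Σ_i ∂D_i/∂x_i = 0 at every point of the RVE domain v, and let ψ : ℝ² → ℝ be C¹ on a neighbourhood of v. If both components of D and the function ψ are boundary-periodic on v, then the electrical microfluctuation term vanishes: ∫_v Σ_i D_i ∂ψ/∂x_i dv = 0. -/

import Mathlib

open MeasureTheory

/-- First partial derivative `∂f/∂x_j` of a scalar field on `ℝ²`. -/
noncomputable def pd (f : (Fin 2 → ℝ) → ℝ) (j : Fin 2) (x : Fin 2 → ℝ) : ℝ :=
  fderiv ℝ f x (Pi.single j 1)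

/-- A function on the rectangle `[a₁,b₁]×[a₂,b₂]` is boundary-periodic if it takes equal
values at opposite points of the left/right and bottom/top edges. -/
def BoundaryPeriodic (a b : Fin 2 → ℝ) (h : (Fin 2 → ℝ) → ℝ) : Prop :=
  (∀ y ∈ Set.Icc (a 1) (b 1), h ![b 0, y] = h ![a 0, y]) ∧
  (∀ x ∈ Set.Icc (a 0) (b 0), h ![x, b 1] = h ![x, a 1])

lemma insertNth_one_eq (c : ℝ) (y : Fin 1 → ℝ) : Fin.insertNth (1 : Fin 2) c y = ![y 0, c] := by
  funext j; fin_cases j <;>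
    simp [Fin.insertNth_apply_succAbove, Fin.insertNth_apply_same] <;> rfl

lemma insertNth_zero_eq (c : ℝ) (y : Fin 1 → ℝ) : Fin.insertNth (0 : Fin 2) c y = ![c, y 0] := by
  funext j; fin_cases j <;>
    simp [Fin.insertNth_apply_succAbove, Fin.insertNth_apply_same] <;> rfl

/-- for a divergence-free `C¹` vector field `D` on the RVE
`v = [a₁,b₁]×[a₂,b₂]` and a `C¹` scalar field `ψ`, if both components of `D` and `ψ` are
boundary-periodic on `v`, then the electrical microfluctuation term vanishes:
`∫_v Σ_i D_i ∂ψ/∂x_i = 0`. -/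
theorem electrical_microfluctuation_vanishes
    (a b : Fin 2 → ℝ) (hab0 : a 0 < b 0) (hab1 : a 1 < b 1)
    (U : Set (Fin 2 → ℝ)) (hU : IsOpen U) (hvU : Set.Icc a b ⊆ U)
    (D : (Fin 2 → ℝ) → Fin 2 → ℝ) (hD : ContDiffOn ℝ 1 D U)
    (hdiv : ∀ x ∈ Set.Icc a b, ∑ i, pd (fun y => D y i) i x = 0)
    (ψ : (Fin 2 → ℝ) → ℝ) (hψ : ContDiffOn ℝ 1 ψ U)
    (hperD : ∀ i, BoundaryPeriodic a b (fun x => D x i))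
    (hperψ : BoundaryPeriodic a b ψ) :
    ∫ x in Set.Icc a b, ∑ i, D x i * pd ψ i x = 0 := by
  have hle : a ≤ b := by
    intro i; fin_cases i <;> [exact hab0.le; exact hab1.le]
  have hDi : ∀ i, ContDiffOn ℝ 1 (fun y => D y i) U := by
    intro i
    exact (ContDiffOn.comp (ContDiff.contDiffOn (contDiff_apply ℝ ℝ i)) hD (Set.mapsTo_univ _ _))
  set f : Fin 2 → (Fin 2 → ℝ) → ℝ := fun i x => ψ x * D x i with hf
  set f' : Fin 2 → (Fin 2 → ℝ) → (Fin 2 → ℝ) →L[ℝ] ℝ :=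
    fun i x => ψ x • fderiv ℝ (fun y => D y i) x + D x i • fderiv ℝ ψ x with hf'
  have hψd : ∀ x ∈ U, HasFDerivAt ψ (fderiv ℝ ψ x) x := fun x hx =>
    ((hψ.differentiableOn one_ne_zero).differentiableAt (hU.mem_nhds hx)).hasFDerivAt
  have hDd : ∀ i, ∀ x ∈ U, HasFDerivAt (fun y => D y i) (fderiv ℝ (fun y => D y i) x) x :=
    fun i x hx =>
      (((hDi i).differentiableOn one_ne_zero).differentiableAt (hU.mem_nhds hx)).hasFDerivAt
  have hfd : ∀ x ∈ U, ∀ i, HasFDerivAt (f i) (f' i x) x := by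
    intro x hx i
    exact (hψd x hx).mul (hDd i x hx)
  have key := MeasureTheory.integral_divergence_of_hasFDerivAt_off_countable'
    (n := 1) a b hle f f' ∅ Set.countable_empty
    (fun i => ((hψ.continuousOn.mul (hDi i).continuousOn).mono hvU))
    (by
      intro x hx i
      refine hfd x ?_ i
      exact hvU ⟨fun j => (hx.1 j (Set.mem_univ j)).1.le, fun j => (hx.1 j (Set.mem_univ j)).2.le⟩)
    (by
      apply ContinuousOn.integrableOn_compact isCompact_Icc
      apply continuousOn_finset_sum
      intro i _
      refine ContinuousOn.mono ?_ hvU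
      have h1 : ContinuousOn (fun x => (fderiv ℝ (fun y => D y i) x) (Pi.single i 1)) U :=
        ((hDi i).continuousOn_fderiv_of_isOpen hU le_rfl).clm_apply continuousOn_const
      have h2 : ContinuousOn (fun x => (fderiv ℝ ψ x) (Pi.single i 1)) U :=
        (hψ.continuousOn_fderiv_of_isOpen hU le_rfl).clm_apply continuousOn_const
      exact
        (hψ.continuousOn.mul h1).add ((hDi i).continuousOn.mul h2))
  rw [Fin.sum_univ_two] at key
  have hbd0 :
      ((∫ (x : Fin 1 → ℝ) in Set.Icc (a ∘ Fin.succAbove 0) (b ∘ Fin.succAbove 0),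
          f 0 (Fin.insertNth 0 (b 0) x)) -
       ∫ (x : Fin 1 → ℝ) in Set.Icc (a ∘ Fin.succAbove 0) (b ∘ Fin.succAbove 0),
          f 0 (Fin.insertNth 0 (a 0) x)) = 0 := by
    rw [sub_eq_zero]
    apply setIntegral_congr_fun measurableSet_Icc
    intro y hy
    have hmem : y 0 ∈ Set.Icc (a 1) (b 1) := ⟨hy.1 0, hy.2 0⟩
    have h1 : ψ ![b 0, y 0] = ψ ![a 0, y 0] := hperψ.1 _ hmem
    have h2 : D ![b 0, y 0] 0 = D ![a 0, y 0] 0 := (hperD 0).1 _ hmem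
    simp only [hf, insertNth_zero_eq, h1, h2]
  have hbd1 :
      ((∫ (x : Fin 1 → ℝ) in Set.Icc (a ∘ Fin.succAbove 1) (b ∘ Fin.succAbove 1),
          f 1 (Fin.insertNth 1 (b 1) x)) -
       ∫ (x : Fin 1 → ℝ) in Set.Icc (a ∘ Fin.succAbove 1) (b ∘ Fin.succAbove 1),
          f 1 (Fin.insertNth 1 (a 1) x)) = 0 := by
    rw [sub_eq_zero]
    apply setIntegral_congr_fun measurableSet_Icc
    intro y hy
    have hmem : y 0 ∈ Set.Icc (a 0) (b 0) := ⟨hy.1 0, hy.2 0⟩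
    have h1 : ψ ![y 0, b 1] = ψ ![y 0, a 1] := hperψ.2 _ hmem
    have h2 : D ![y 0, b 1] 1 = D ![y 0, a 1] 1 := (hperD 1).2 _ hmem
    simp only [hf, insertNth_one_eq, h1, h2]
  rw [hbd0, hbd1, add_zero] at key
  rw [← key]
  apply setIntegral_congr_fun measurableSet_Icc
  intro x hx
  have hdd := hdiv x hx
  show ∑ i, D x i * pd ψ i x = ∑ i : Fin 2, (f' i x) (Pi.single i 1)
  rw [Fin.sum_univ_two, Fin.sum_univ_two] at *
  simp only [hf', pd, ContinuousLinearMap.add_apply, ContinuousLinearMap.smul_apply,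
    smul_eq_mul] at *
  linear_combination (-(ψ x)) * hdd
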